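/- Let σ be a victorious play-measure of weight w. Then for every x < w there exists a finitely founded play-measure τ ≤ σ with weight at least x. -/

import Mathlib

open scoped ENNReal Classical

/-- Active-ending plays over signature `(K, ar)`: alternating sequences of
outputs `k : K` and inputs `i : ar k`. -/
inductive APlay (K : Type) (ar : K → Type) : Type
  | nil : APlay K ar
  | cons (k : K) (i : ar k) (s : APlay K ar) : APlay K ar

variable {K : Type} {ar : K → Type}

/-- Append an output-input pair at the end of an active-ending play. -/
def APlay.snoc : APlay K ar → (k : K) → ar k → APlay K ar
  | .nil, k, i => .cons k i .nil
  | .cons l j s, k, i => .cons l j (s.snoc k i)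

/-- The number of output-input cycles in an active-ending play. -/
def APlay.len : APlay K ar → ℕ
  | .nil => 0
  | .cons _ _ s => s.len + 1

/-- A play-measure: values in `[0,1]` on passive-ending plays (an active play
followed by an output), with `σ_act t = ∑_k σ_pass (t.k)` and
`σ_act (s.k.i) = σ_pass (s.k)`. -/
structure PlayMeasure (K : Type) (ar : K → Type) where
  pass : APlay K ar → K → ℝ≥0∞
  le_one : ∀ t, (∑' k, pass t k) ≤ 1
  consistent : ∀ s k (i : ar k), pass s k = ∑' l, pass (s.snoc k i) l

/-- The value of a play-measure on an active-ending play. -/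
noncomputable def PlayMeasure.act (σ : PlayMeasure K ar) (t : APlay K ar) : ℝ≥0∞ :=
  ∑' k, σ.pass t k

/-- The weight of a play-measure. -/
noncomputable def PlayMeasure.weight (σ : PlayMeasure K ar) : ℝ≥0∞ := σ.act .nil

/-- A partial counterstrategy, given by its set of active-ending plays. -/
structure Counterstrategy (K : Type) (ar : K → Type) where
  act : Set (APlay K ar)
  nil_mem : APlay.nil ∈ act
  prefix_closed : ∀ (s : APlay K ar) (k : K) (i : ar k), s.snoc k i ∈ act → s ∈ act
  deterministic : ∀ (s : APlay K ar) (k : K) (i j : ar k),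
      s.snoc k i ∈ act → s.snoc k j ∈ act → i = j

/-- The passive-ending play `s.k` is a `ρ`-failure: it is in `ρ_pass`
and has no prescribed input. -/
def Counterstrategy.Fails (ρ : Counterstrategy K ar) (s : APlay K ar) (k : K) : Prop :=
  s ∈ ρ.act ∧ ∀ i : ar k, s.snoc k i ∉ ρ.act

/-- `P^m_ρ(σ)`: the sum of `σ_act` over the length-`m` plays in `ρ_act`. -/
noncomputable def contProb (ρ : Counterstrategy K ar) (σ : PlayMeasure K ar) (m : ℕ) : ℝ≥0∞ :=
  ∑' s : {s : APlay K ar // s ∈ ρ.act ∧ s.len = m}, σ.act s.1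

/-- The sum of `σ_pass` over the `ρ`-failures of length `m`. -/
noncomputable def failProb (ρ : Counterstrategy K ar) (σ : PlayMeasure K ar) (m : ℕ) : ℝ≥0∞ :=
  ∑' p : {p : APlay K ar × K // ρ.Fails p.1 p.2 ∧ p.1.len = m}, σ.pass p.1.1 p.1.2

/-- A play-measure is victorious when against every partial counterstrategy,
the probability of play continuing forever is zero. -/
def Victorious (σ : PlayMeasure K ar) : Prop :=
  ∀ ρ : Counterstrategy K ar, (⨅ m, contProb ρ σ m) = 0

/-- The length-`n` prefix of an infinite play. -/
def prefixPlay (f : ℕ → Σ k : K, ar k) : ℕ → APlay K ar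
  | 0 => .nil
  | n + 1 => (prefixPlay f n).snoc (f n).1 (f n).2

/-- A play-measure is well-founded when no infinite play has all its
prefixes in the support. -/
def PlayMeasure.WellFoundedPM (σ : PlayMeasure K ar) : Prop :=
  ¬ ∃ f : ℕ → Σ k : K, ar k, ∀ n, 0 < σ.pass (prefixPlay f n) (f n).1

/-- A play-measure is finitely branching when each active-ending play has
finitely many possible next outputs in the support. -/
def PlayMeasure.FinBranch (σ : PlayMeasure K ar) : Prop :=
  ∀ t : APlay K ar, {k : K | 0 < σ.pass t k}.Finite

/-- Finitely founded: well-founded and finitely branching. -/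
def PlayMeasure.FinFounded (σ : PlayMeasure K ar) : Prop :=
  σ.WellFoundedPM ∧ σ.FinBranch

/-- `f` is uniformly below `g`: there is `d > 0` with `f s + d ≤ g s` on
every passive-ending play `s` in the support of `f`. -/
def UBelow (f g : APlay K ar → K → ℝ≥0∞) : Prop :=
  ∃ d : ℝ≥0∞, 0 < d ∧ ∀ s k, 0 < f s k → f s k + d ≤ g s k

namespace Stmt12
open OrderHom OrdinalApprox

variable {K : Type} {ar : K → Type}

lemma len_snoc (s : APlay K ar) (k : K) (i : ar k) : (s.snoc k i).len = s.len + 1 := by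
  induction s with
  | nil => rfl
  | cons l j s ih => simp [APlay.snoc, APlay.len, ih]

lemma snoc_ne_nil (s : APlay K ar) (k : K) (i : ar k) : s.snoc k i ≠ .nil := by
  cases s <;> simp [APlay.snoc]

lemma snoc_inj {s s' : APlay K ar} {k k' : K} {i : ar k} {i' : ar k'}
    (h : s.snoc k i = s'.snoc k' i') : s = s' ∧ ∃ h : k = k', i = h ▸ i' := by
  induction s generalizing s' with
  | nil =>
    cases s' with
    | nil =>
      simp only [APlay.snoc] at h
      injection h with h1 h2 h3
      subst h1; exact ⟨rfl, rfl, eq_of_heq h2⟩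
    | cons l j t =>
      simp only [APlay.snoc] at h
      injection h with h1 h2 h3
      subst h1
      exact absurd h3.symm (snoc_ne_nil t k' i')
  | cons l j t ih =>
    cases s' with
    | nil =>
      simp only [APlay.snoc] at h
      injection h with h1 h2 h3
      subst h1
      exact absurd h3 (snoc_ne_nil t k i)
    | cons l' j' t' =>
      simp only [APlay.snoc] at h
      injection h with h1 h2 h3
      subst h1
      obtain ⟨rfl, hk⟩ := ih h3
      exact ⟨by rw [eq_of_heq h2], hk⟩

/-- every nonempty play is a snoc -/
lemma eq_snoc_or_nil (s : APlay K ar) :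
    s = .nil ∨ ∃ (t : APlay K ar) (k : K) (i : ar k), s = t.snoc k i := by
  induction s with
  | nil => exact Or.inl rfl
  | cons l j t ih =>
    rcases ih with rfl | ⟨u, k, i, rfl⟩
    · exact Or.inr ⟨.nil, l, j, rfl⟩
    · exact Or.inr ⟨.cons l j u, k, i, rfl⟩

lemma eq_snoc_of_len_succ {s : APlay K ar} {m : ℕ} (h : s.len = m + 1) :
    ∃ (t : APlay K ar) (k : K) (i : ar k), s = t.snoc k i ∧ t.len = m := by
  rcases eq_snoc_or_nil s with rfl | ⟨t, k, i, rfl⟩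
  · simp [APlay.len] at h
  · rw [len_snoc] at h
    exact ⟨t, k, i, rfl, by omega⟩

/-- append -/
def app : APlay K ar → APlay K ar → APlay K ar
  | p, .nil => p
  | p, .cons k i s => app (p.snoc k i) s

@[simp] lemma app_nil' (p : APlay K ar) : app p .nil = p := rfl

lemma app_cons (p : APlay K ar) (k : K) (i : ar k) (s : APlay K ar) :
    app p (.cons k i s) = app (p.snoc k i) s := rfl

lemma cons_app (k : K) (i : ar k) (p s : APlay K ar) :
    app (.cons k i p) s = .cons k i (app p s) := by
  induction s generalizing p with
  | nil => rfl
  | cons k' i' s' ih => rw [app_cons, app_cons, APlay.snoc, ih]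

@[simp] lemma app_nil (s : APlay K ar) : app .nil s = s := by
  cases s with
  | nil => rfl
  | cons k i s' => rw [app_cons, APlay.snoc, cons_app, app_nil]

lemma app_snoc (p s : APlay K ar) (k : K) (i : ar k) :
    app p (s.snoc k i) = (app p s).snoc k i := by
  induction s generalizing p with
  | nil => rfl
  | cons k' i' s' ih => rw [APlay.snoc, app_cons, app_cons, ih]

variable (σ : PlayMeasure K ar)

lemma pass_le_one (s : APlay K ar) (k : K) : σ.pass s k ≤ 1 :=
  le_trans (ENNReal.le_tsum k) (σ.le_one s)

/-- the capture operator -/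
noncomputable def Phi : (APlay K ar → K → ℝ≥0∞) →o (APlay K ar → K → ℝ≥0∞) where
  toFun c := fun s k => min (σ.pass s k) (⨅ i : ar k, ∑' l, c (s.snoc k i) l)
  monotone' := by
    intro c d h s k
    exact min_le_min le_rfl (iInf_mono fun i => ENNReal.tsum_le_tsum fun l => h _ _)

/-- capturable mass -/
noncomputable def cap : APlay K ar → K → ℝ≥0∞ := lfp (Phi σ)

lemma cap_fixed : Phi σ (cap σ) = cap σ := map_lfp (Phi σ)

lemma cap_eq (s : APlay K ar) (k : K) :
    cap σ s k = min (σ.pass s k) (⨅ i : ar k, ∑' l, cap σ (s.snoc k i) l) :=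
  (congrFun (congrFun (cap_fixed σ) s) k).symm

lemma cap_le_pass (s : APlay K ar) (k : K) : cap σ s k ≤ σ.pass s k := by
  rw [cap_eq]; exact min_le_left _ _

end Stmt12
namespace Stmt12
variable {K : Type} {ar : K → Type}

/-- exact finite proportional allocation -/
noncomputable def alloc (cap : K → ℝ≥0∞) (v : ℝ≥0∞) (l : K) : ℝ≥0∞ :=
  if h : ∃ S : Finset K, v < ∑ l ∈ S, cap l ∧ (∑ l ∈ S, cap l) ≠ ∞ then
    (if l ∈ h.choose then cap l * (v / ∑ l' ∈ h.choose, cap l') else 0)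
  else 0

lemma alloc_exists {cap : K → ℝ≥0∞} {v : ℝ≥0∞} (h1 : v < ∑' l, cap l)
    (h2 : ∑' l, cap l ≠ ∞) : ∃ S : Finset K, v < ∑ l ∈ S, cap l ∧ (∑ l ∈ S, cap l) ≠ ∞ := by
  rw [ENNReal.tsum_eq_iSup_sum] at h1
  obtain ⟨S, hS⟩ := lt_iSup_iff.1 h1
  exact ⟨S, hS, ne_top_of_le_ne_top h2 (ENNReal.sum_le_tsum S)⟩

lemma alloc_lt {cap : K → ℝ≥0∞} {v : ℝ≥0∞} {l : K} (h : 0 < alloc cap v l) :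
    alloc cap v l < cap l := by
  by_cases hex : ∃ S : Finset K, v < ∑ l ∈ S, cap l ∧ (∑ l ∈ S, cap l) ≠ ∞
  case neg => rw [alloc, dif_neg hex] at h; exact absurd h (lt_irrefl 0)
  rw [alloc, dif_pos hex] at h ⊢
  obtain ⟨hvC, hCt⟩ := hex.choose_spec
  by_cases hl : l ∈ hex.choose
  case neg => rw [if_neg hl] at h; exact absurd h (lt_irrefl 0)
  rw [if_pos hl] at h ⊢
  have hcl : cap l ≠ 0 := by
    intro h0; rw [h0, zero_mul] at h; exact lt_irrefl _ h
  have hclt : cap l ≠ ∞ :=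
    ne_top_of_le_ne_top hCt (Finset.single_le_sum (fun _ _ => zero_le) hl)
  have hC0 : (∑ l' ∈ hex.choose, cap l') ≠ 0 := by
    intro h0; rw [h0] at hvC; exact absurd hvC (by simp)
  have hdiv : v / (∑ l' ∈ hex.choose, cap l') < 1 := by
    rw [ENNReal.div_lt_iff (Or.inl hC0) (Or.inl hCt), one_mul]; exact hvC
  calc cap l * (v / ∑ l' ∈ hex.choose, cap l') < cap l * 1 := by
        rw [ENNReal.mul_lt_mul_iff_right hcl hclt]; exact hdiv
    _ = cap l := mul_one _

lemma alloc_le (cap : K → ℝ≥0∞) (v : ℝ≥0∞) (l : K) : alloc cap v l ≤ cap l := by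
  rcases eq_or_lt_of_le ((zero_le : 0 ≤ alloc cap v l)) with h | h
  · rw [← h]; exact zero_le
  · exact (alloc_lt h).le

lemma alloc_tsum {cap : K → ℝ≥0∞} {v : ℝ≥0∞} (h1 : v < ∑' l, cap l)
    (h2 : ∑' l, cap l ≠ ∞) : ∑' l, alloc cap v l = v := by
  have hex := alloc_exists h1 h2
  simp only [alloc, dif_pos hex]
  obtain ⟨hvC, hCt⟩ := hex.choose_spec
  have hC0 : (∑ l' ∈ hex.choose, cap l') ≠ 0 := by
    intro h0; rw [h0] at hvC; exact absurd hvC (by simp)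
  rw [tsum_eq_sum (s := hex.choose) (fun b hb => if_neg hb)]
  have : ∀ b ∈ hex.choose, (if b ∈ hex.choose then cap b * (v / ∑ l' ∈ hex.choose, cap l') else 0)
      = cap b * (v / ∑ l' ∈ hex.choose, cap l') := fun b hb => if_pos hb
  rw [Finset.sum_congr rfl this, ← Finset.sum_mul]
  exact ENNReal.mul_div_cancel' (fun h => absurd h hC0) (fun h => absurd h hCt)

lemma alloc_zero (cap : K → ℝ≥0∞) (l : K) : alloc cap 0 l = 0 := by
  rw [alloc]
  split
  · split
    · rw [ENNReal.zero_div, mul_zero]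
    · rfl
  · rfl

lemma alloc_tsum_zero (cap : K → ℝ≥0∞) : ∑' l, alloc cap 0 l = 0 := by
  simp [alloc_zero]

lemma alloc_finite (cap : K → ℝ≥0∞) (v : ℝ≥0∞) : {l : K | 0 < alloc cap v l}.Finite := by
  by_cases hex : ∃ S : Finset K, v < ∑ l ∈ S, cap l ∧ (∑ l ∈ S, cap l) ≠ ∞
  · apply Set.Finite.subset hex.choose.finite_toSet
    intro l hl
    simp only [Set.mem_setOf_eq, alloc, dif_pos hex] at hl
    by_contra hn
    rw [if_neg (by exact fun h => hn (Finset.mem_coe.2 h))] at hl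
    exact lt_irrefl _ hl
  · convert Set.finite_empty
    ext l
    simp only [Set.mem_setOf_eq, alloc, dif_neg hex, Set.mem_empty_iff_false, iff_false]
    exact lt_irrefl 0

end Stmt12
namespace Stmt12
variable {K : Type} {ar : K → Type}

/-- small epsilons -/
noncomputable def E (m : ℕ) : ℝ≥0∞ := 2⁻¹ ^ (m + 2)

lemma E_ne_zero (m : ℕ) : E m ≠ 0 := pow_ne_zero _ (ENNReal.inv_ne_zero.2 ENNReal.ofNat_ne_top)

lemma E_le_one (m : ℕ) : E m ≤ 1 := pow_le_one' (ENNReal.inv_le_one.2 one_le_two) _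

lemma E_sum_le (m : ℕ) : ∑ j ∈ Finset.range m, E j ≤ 2⁻¹ := by
  have h1 : ∑ j ∈ Finset.range m, E j ≤ ∑' j : ℕ, E j :=
    ENNReal.sum_le_tsum _
  have h2 : ∑' j : ℕ, E j = 2⁻¹ := by
    simp only [E, pow_add]
    rw [ENNReal.tsum_mul_right, ENNReal.tsum_geometric, ENNReal.one_sub_inv_two, inv_inv]
    rw [pow_two, ← mul_assoc, ENNReal.mul_inv_cancel two_ne_zero ENNReal.ofNat_ne_top, one_mul]
  exact h2 ▸ h1

lemma mul_one_sub_ge {x ε : ℝ≥0∞} (hx : x ≤ 1) (hε : ε ≤ 1) : x - ε ≤ x * (1 - ε) := by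
  rw [tsub_le_iff_right]
  calc x = x * ((1 - ε) + ε) := by rw [tsub_add_cancel_of_le hε, mul_one]
    _ = x * (1 - ε) + x * ε := by rw [mul_add]
    _ ≤ x * (1 - ε) + ε := add_le_add_right (by simpa using mul_le_mul_left hx ε) _

/-- partial products -/
noncomputable def Q (m : ℕ) : ℝ≥0∞ := ∏ j ∈ Finset.range m, (1 - E j)

lemma Q_le_one (m : ℕ) : Q m ≤ 1 :=
  Finset.prod_le_one (fun _ _ => zero_le) (fun _ _ => tsub_le_self)

lemma Q_ge (m : ℕ) : 2⁻¹ ≤ Q m := by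
  have key : ∀ m, 1 - ∑ j ∈ Finset.range m, E j ≤ Q m := by
    intro m
    induction m with
    | zero => simp [Q]
    | succ n ih =>
      rw [Q, Finset.prod_range_succ, Finset.sum_range_succ, ← tsub_tsub]
      calc (1 - ∑ j ∈ Finset.range n, E j) - E n ≤ Q n - E n := tsub_le_tsub_right ih _
        _ ≤ Q n * (1 - E n) := mul_one_sub_ge (Q_le_one n) (E_le_one n)
  calc (2:ℝ≥0∞)⁻¹ = 1 - 2⁻¹ := ENNReal.one_sub_inv_two.symm
    _ ≤ 1 - ∑ j ∈ Finset.range m, E j := tsub_le_tsub_left (E_sum_le m) 1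
    _ ≤ Q m := key m

section
variable (σ : PlayMeasure K ar)

/-- deficiency -/
noncomputable def D (s : APlay K ar) (k : K) : ℝ≥0∞ := σ.pass s k - cap σ s k

lemma D_le_pass (s : APlay K ar) (k : K) : D σ s k ≤ σ.pass s k := tsub_le_self

lemma D_ne_top (s : APlay K ar) (k : K) : D σ s k ≠ ∞ :=
  ne_top_of_le_ne_top (by simp : (1:ℝ≥0∞) ≠ ∞) (le_trans (D_le_pass σ s k) (pass_le_one σ s k))

lemma D_add_cap (s : APlay K ar) (k : K) : D σ s k + cap σ s k = σ.pass s k :=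
  tsub_add_cancel_of_le (cap_le_pass σ s k)

lemma weight_le_D_add : σ.weight ≤ (∑' k, D σ .nil k) + ∑' k, cap σ .nil k := by
  rw [← ENNReal.tsum_add]
  exact ENNReal.tsum_le_tsum fun k => le_of_eq (D_add_cap σ .nil k).symm

lemma D_step (s : APlay K ar) (k : K) :
    D σ s k ≤ ⨆ i : ar k, ∑' l, D σ (s.snoc k i) l := by
  have h1 : D σ s k = σ.pass s k - ⨅ i : ar k, ∑' l, cap σ (s.snoc k i) l := by
    rw [D, cap_eq]
    rcases le_total (σ.pass s k) (⨅ i : ar k, ∑' l, cap σ (s.snoc k i) l) with h | h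
    · rw [min_eq_left h, tsub_self]
      exact (tsub_eq_zero_of_le h).symm
    · rw [min_eq_right h]
  rw [h1, ENNReal.sub_iInf]
  refine iSup_mono fun i => ?_
  rw [tsub_le_iff_right, σ.consistent s k i, ← ENNReal.tsum_add]
  exact ENNReal.tsum_le_tsum fun l => le_of_eq (D_add_cap σ _ l).symm

/-- a good reply for the opponent at `(s, k)` -/
def Good (s : APlay K ar) (k : K) (i : ar k) : Prop :=
  (1 - E s.len) * D σ s k < ∑' l, D σ (s.snoc k i) l

lemma exists_good {s : APlay K ar} {k : K} (h : 0 < D σ s k) : ∃ i, Good σ s k i := by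
  have hlt : (1 - E s.len) * D σ s k < D σ s k := by
    conv_rhs => rw [← one_mul (D σ s k)]
    exact (ENNReal.mul_lt_mul_iff_left h.ne' (D_ne_top σ s k)).2
      (ENNReal.sub_lt_self ENNReal.one_ne_top one_ne_zero (E_ne_zero _))
  have := lt_of_lt_of_le hlt (D_step σ s k)
  exact lt_iSup_iff.1 this |>.imp fun i hi => hi

/-- opponent's selected replies -/
noncomputable def sel (s : APlay K ar) (k : K) : Set (ar k) :=
  if h : ∃ i, Good σ s k i then {h.choose} else ∅

lemma sel_subsingleton (s : APlay K ar) (k : K) {i j : ar k}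
    (hi : i ∈ sel σ s k) (hj : j ∈ sel σ s k) : i = j := by
  by_cases h : ∃ i, Good σ s k i
  · rw [sel, dif_pos h, Set.mem_singleton_iff] at hi hj; rw [hi, hj]
  · rw [sel, dif_neg h] at hi; exact absurd hi (Set.notMem_empty i)

def follows (p : APlay K ar) : APlay K ar → Prop
  | .nil => True
  | .cons k i s => i ∈ sel σ p k ∧ follows (p.snoc k i) s

lemma follows_snoc (p s : APlay K ar) (k : K) (i : ar k) :
    follows σ p (s.snoc k i) ↔ follows σ p s ∧ i ∈ sel σ (app p s) k := by
  induction s generalizing p with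
  | nil => simp [APlay.snoc, follows]
  | cons k' i' s' ih =>
    show (i' ∈ sel σ p k' ∧ follows σ (p.snoc k' i') (s'.snoc k i)) ↔
      (i' ∈ sel σ p k' ∧ follows σ (p.snoc k' i') s') ∧ i ∈ sel σ (app p (.cons k' i' s')) k
    rw [ih, app_cons, and_assoc]

/-- the counterstrategy -/
noncomputable def rho : Counterstrategy K ar where
  act := {s | follows σ .nil s}
  nil_mem := trivial
  prefix_closed := fun s k i h => ((follows_snoc σ .nil s k i).1 h).1
  deterministic := fun s k i j hi hj =>
    sel_subsingleton σ (app .nil s) k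
      ((follows_snoc σ .nil s k i).1 hi).2 ((follows_snoc σ .nil s k j).1 hj).2

end
end Stmt12
namespace Stmt12
variable {K : Type} {ar : K → Type}

lemma len_eq_zero {s : APlay K ar} (h : s.len = 0) : s = .nil := by
  cases s with
  | nil => rfl
  | cons k i t => simp [APlay.len] at h

section
variable (σ : PlayMeasure K ar)

/-- level mass of the deficiency along `rho` -/
noncomputable def T (m : ℕ) : ℝ≥0∞ :=
  ∑' s : {s : APlay K ar // s ∈ (rho σ).act ∧ s.len = m}, ∑' k, D σ s.1 k

lemma T_zero : T σ 0 = ∑' k, D σ .nil k := by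
  rw [T, tsum_eq_single (⟨.nil, (rho σ).nil_mem, rfl⟩ :
      {s : APlay K ar // s ∈ (rho σ).act ∧ s.len = 0}) ?_]
  intro b hb
  exact absurd (Subtype.ext (len_eq_zero b.2.2)) hb

lemma T_step (m : ℕ) : (1 - E m) * T σ m ≤ T σ (m+1) := by
  classical
  have h1 : (1 - E m) * T σ m
      = ∑' q : {s : APlay K ar // s ∈ (rho σ).act ∧ s.len = m} × K,
          (1 - E m) * D σ q.1.1 q.2 := by
    rw [T, ← ENNReal.tsum_mul_left]
    rw [tsum_congr (fun s => (ENNReal.tsum_mul_left).symm)]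
    exact ENNReal.tsum_prod.symm
  have h2 : ∑' q : {s : APlay K ar // s ∈ (rho σ).act ∧ s.len = m} × K,
        (1 - E m) * D σ q.1.1 q.2
      = ∑' p : {q : {s : APlay K ar // s ∈ (rho σ).act ∧ s.len = m} × K //
          0 < D σ q.1.1 q.2}, (1 - E m) * D σ p.1.1.1 p.1.2 := by
    refine (tsum_subtype_eq_of_support_subset ?_).symm
    intro q hq
    rcases eq_or_lt_of_le ((zero_le : 0 ≤ D σ q.1.1 q.2)) with hD | hD
    · refine absurd ?_ hq
      show (1 - E m) * D σ q.1.1 q.2 = 0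
      rw [← hD, mul_zero]
    · exact hD
  have exGood : ∀ p : {q : {s : APlay K ar // s ∈ (rho σ).act ∧ s.len = m} × K //
      0 < D σ q.1.1 q.2}, ∃ i, Good σ p.1.1.1 p.1.2 i := fun p => exists_good σ p.2
  have ch_mem : ∀ p : {q : {s : APlay K ar // s ∈ (rho σ).act ∧ s.len = m} × K //
      0 < D σ q.1.1 q.2}, (p.1.1.1.snoc p.1.2 (exGood p).choose) ∈ (rho σ).act := by
    intro p
    show follows σ .nil _
    refine (follows_snoc σ .nil _ _ _).2 ⟨p.1.1.2.1, ?_⟩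
    rw [app_nil, sel, dif_pos (exGood p)]
    rfl
  have ch_len : ∀ p : {q : {s : APlay K ar // s ∈ (rho σ).act ∧ s.len = m} × K //
      0 < D σ q.1.1 q.2}, (p.1.1.1.snoc p.1.2 (exGood p).choose).len = m + 1 := by
    intro p
    rw [len_snoc, p.1.1.2.2]
  have h3 : ∑' p : {q : {s : APlay K ar // s ∈ (rho σ).act ∧ s.len = m} × K //
        0 < D σ q.1.1 q.2}, (1 - E m) * D σ p.1.1.1 p.1.2
      ≤ ∑' p : {q : {s : APlay K ar // s ∈ (rho σ).act ∧ s.len = m} × K //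
        0 < D σ q.1.1 q.2}, ∑' l, D σ (p.1.1.1.snoc p.1.2 (exGood p).choose) l := by
    refine ENNReal.tsum_le_tsum fun p => ?_
    have hg := (exGood p).choose_spec
    simp only [Good] at hg
    rw [p.1.1.2.2] at hg
    exact hg.le
  have h4 : ∑' p : {q : {s : APlay K ar // s ∈ (rho σ).act ∧ s.len = m} × K //
        0 < D σ q.1.1 q.2}, ∑' l, D σ (p.1.1.1.snoc p.1.2 (exGood p).choose) l
      = ∑' pl : {q : {s : APlay K ar // s ∈ (rho σ).act ∧ s.len = m} × K //
        0 < D σ q.1.1 q.2} × K, D σ (pl.1.1.1.1.snoc pl.1.1.2 (exGood pl.1).choose) pl.2 :=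
    ENNReal.tsum_prod.symm
  have e_inj : Function.Injective
      (fun pl : {q : {s : APlay K ar // s ∈ (rho σ).act ∧ s.len = m} × K //
          0 < D σ q.1.1 q.2} × K =>
        ((⟨pl.1.1.1.1.snoc pl.1.1.2 (exGood pl.1).choose, ch_mem pl.1, ch_len pl.1⟩ :
          {s : APlay K ar // s ∈ (rho σ).act ∧ s.len = m + 1}), pl.2)) := by
    intro ⟨p, l⟩ ⟨p', l'⟩ hpl
    simp only [Prod.mk.injEq, Subtype.mk.injEq] at hpl
    obtain ⟨hc, rfl⟩ := hpl
    obtain ⟨hs, hk, _⟩ := snoc_inj hc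
    have h11 : p.1.1 = p'.1.1 := Subtype.ext hs
    have h12 : p.1 = p'.1 := Prod.ext h11 hk
    rw [Subtype.ext h12]
  have h5 : ∑' pl : {q : {s : APlay K ar // s ∈ (rho σ).act ∧ s.len = m} × K //
        0 < D σ q.1.1 q.2} × K, D σ (pl.1.1.1.1.snoc pl.1.1.2 (exGood pl.1).choose) pl.2
      ≤ ∑' q : {s : APlay K ar // s ∈ (rho σ).act ∧ s.len = m + 1} × K, D σ q.1.1 q.2 :=
    ENNReal.tsum_comp_le_tsum_of_injective e_inj (fun q => D σ q.1.1 q.2)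
  have h6 : ∑' q : {s : APlay K ar // s ∈ (rho σ).act ∧ s.len = m + 1} × K,
      D σ q.1.1 q.2 = T σ (m+1) := by
    rw [T]
    exact ENNReal.tsum_prod
      (f := fun (a : {s : APlay K ar // s ∈ (rho σ).act ∧ s.len = m + 1}) (b : K) => D σ a.1 b)
  rw [h1, h2, ← h6]
  exact le_trans h3 (le_trans h4.le h5)

lemma T_le_contProb (m : ℕ) : T σ m ≤ contProb (rho σ) σ m :=
  ENNReal.tsum_le_tsum fun s => ENNReal.tsum_le_tsum fun k => D_le_pass σ s.1 k

lemma T_ge (m : ℕ) : (σ.weight - ∑' k, cap σ .nil k) * Q m ≤ T σ m := by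
  induction m with
  | zero =>
    rw [Q, Finset.prod_range_zero, mul_one, T_zero]
    exact tsub_le_iff_right.2 (weight_le_D_add σ)
  | succ n ih =>
    have h1 : (σ.weight - ∑' k, cap σ .nil k) * Q (n+1)
        = (1 - E n) * ((σ.weight - ∑' k, cap σ .nil k) * Q n) := by
      rw [Q, Finset.prod_range_succ, ← Q]; ring
    rw [h1]
    exact le_trans (mul_le_mul_right ih _) (T_step σ n)

lemma weight_le_capsum (hσ : Victorious σ) : σ.weight ≤ ∑' k, cap σ .nil k := by
  by_contra hcon
  push_neg at hcon
  have hδ : 0 < σ.weight - ∑' k, cap σ .nil k := tsub_pos_of_lt hcon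
  have hpos : (σ.weight - ∑' k, cap σ .nil k) * 2⁻¹ ≤ ⨅ m, contProb (rho σ) σ m := by
    refine le_iInf fun m => ?_
    exact le_trans (mul_le_mul_right (Q_ge m) _) (le_trans (T_ge σ m) (T_le_contProb σ m))
  rw [hσ (rho σ)] at hpos
  have := le_antisymm hpos zero_le
  rcases mul_eq_zero.1 this with h | h
  · exact hδ.ne' h
  · exact (ENNReal.inv_ne_zero.2 ENNReal.ofNat_ne_top) h

end
end Stmt12
namespace Stmt12
open OrdinalApprox
variable {K : Type} {ar : K → Type}

section
variable (σ : PlayMeasure K ar)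

/-- ordinal approximants of `cap` -/
noncomputable def A (α : Ordinal) : APlay K ar → K → ℝ≥0∞ := lfpApprox (Phi σ) ⊥ α

lemma A_succ (α : Ordinal) : A σ (α + 1) = Phi σ (A σ α) :=
  lfpApprox_add_one (Phi σ) bot_le α

lemma A_le_cap (α : Ordinal) : A σ α ≤ cap σ :=
  lfpApprox_le_of_mem_fixedPoints (Phi σ) (cap_fixed σ) bot_le α

lemma exists_stage {s : APlay K ar} {k : K} {v : ℝ≥0∞} (h : v < cap σ s k) :
    ∃ β, v < A σ (β + 1) s k := by
  refine ⟨Cardinal.ord (Order.succ (Cardinal.mk (APlay K ar → K → ℝ≥0∞))), ?_⟩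
  have h1 : A σ (Cardinal.ord (Order.succ (Cardinal.mk (APlay K ar → K → ℝ≥0∞)))) = cap σ :=
    lfpApprox_ord_eq_lfp (Phi σ)
  calc v < cap σ s k := h
    _ = A σ _ s k := by rw [h1]
    _ ≤ A σ _ s k := by
        exact lfpApprox_mono_right (Phi σ) (x := ⊥) (le_of_lt (Order.lt_succ _)) s k

lemma unfold_lt {v : ℝ≥0∞} {γ : Ordinal} {s : APlay K ar} {k : K}
    (h : v < A σ γ s k) : ∃ β < γ, v < A σ (β + 1) s k := by
  rw [A, lfpApprox, bot_sup_eq] at h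
  simp only [iSup_apply] at h
  obtain ⟨β, hvβ⟩ := lt_iSup_iff.1 h
  obtain ⟨hβ, hvf⟩ := lt_iSup_iff.1 hvβ
  exact ⟨β, hβ, by rw [A_succ]; exact hvf⟩

/-- rank of a value below `cap` -/
noncomputable def rk (v : ℝ≥0∞) (s : APlay K ar) (k : K) : Ordinal :=
  sInf {β | v < A σ (β + 1) s k}

lemma rk_spec {v : ℝ≥0∞} {s : APlay K ar} {k : K} (h : v < cap σ s k) :
    v < A σ (rk σ v s k + 1) s k :=
  csInf_mem (⟨(exists_stage σ h).choose, (exists_stage σ h).choose_spec⟩ :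
    Set.Nonempty {β | v < A σ (β + 1) s k})

lemma rk_decrease {a v : ℝ≥0∞} {s s' : APlay K ar} {k l : K}
    (h : a < A σ (rk σ v s k) s' l) : rk σ a s' l < rk σ v s k := by
  obtain ⟨β, hβ, hab⟩ := unfold_lt σ h
  exact lt_of_le_of_lt (csInf_le' hab) hβ

/-- allocation to the children of a node -/
noncomputable def chAlloc (p : APlay K ar) (v : ℝ≥0∞) (k : K) (i : ar k) : K → ℝ≥0∞ :=
  alloc (fun l => A σ (rk σ v p k) (p.snoc k i) l) v

lemma A_tsum_le_one (α : Ordinal) (t : APlay K ar) : ∑' l, A σ α t l ≤ 1 :=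
  le_trans (ENNReal.tsum_le_tsum fun l =>
    le_trans (A_le_cap σ α t l) (cap_le_pass σ t l)) (σ.le_one t)

lemma chAlloc_bound {p : APlay K ar} {v : ℝ≥0∞} {k : K} (hvc : v < cap σ p k) (i : ar k) :
    v < ∑' l, A σ (rk σ v p k) (p.snoc k i) l := by
  have h1 := rk_spec σ hvc
  rw [A_succ] at h1
  exact lt_of_lt_of_le h1 (le_trans (min_le_right _ _) (iInf_le _ i))

lemma chAlloc_tsum {p : APlay K ar} {v : ℝ≥0∞} {k : K} (hvc : v < cap σ p k) (i : ar k) :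
    ∑' l, chAlloc σ p v k i l = v :=
  alloc_tsum (chAlloc_bound σ hvc i)
    (ne_top_of_le_ne_top ENNReal.one_ne_top (A_tsum_le_one σ _ _))

lemma chAlloc_lt {p : APlay K ar} {v : ℝ≥0∞} {k : K} {i : ar k} {l : K}
    (h : 0 < chAlloc σ p v k i l) :
    chAlloc σ p v k i l < A σ (rk σ v p k) (p.snoc k i) l :=
  alloc_lt h

lemma chAlloc_inv {p : APlay K ar} {v : ℝ≥0∞} {k : K} {i : ar k} {l : K}
    (h : 0 < chAlloc σ p v k i l) : chAlloc σ p v k i l < cap σ (p.snoc k i) l :=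
  lt_of_lt_of_le (chAlloc_lt σ h) (A_le_cap σ _ _ _)

lemma chAlloc_rk {p : APlay K ar} {v : ℝ≥0∞} {k : K} {i : ar k} {l : K}
    (h : 0 < chAlloc σ p v k i l) :
    rk σ (chAlloc σ p v k i l) (p.snoc k i) l < rk σ v p k :=
  rk_decrease σ (chAlloc_lt σ h)

/-- the finitely founded play-measure, built from the root down -/
noncomputable def build : APlay K ar → (K → ℝ≥0∞) → APlay K ar → K → ℝ≥0∞
  | _, g, .nil, l => g l
  | p, g, .cons k i s, l => build (p.snoc k i) (chAlloc σ p (g k) k i) s l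

/-- invariant: positive values sit strictly below `cap` -/
def Inv (p : APlay K ar) (g : K → ℝ≥0∞) : Prop := ∀ k, 0 < g k → g k < cap σ p k

lemma inv_chAlloc (p : APlay K ar) (v : ℝ≥0∞) (k : K) (i : ar k) :
    Inv σ (p.snoc k i) (chAlloc σ p v k i) := fun _ h => chAlloc_inv σ h

lemma build_le_pass (s : APlay K ar) : ∀ (p : APlay K ar) (g : K → ℝ≥0∞), Inv σ p g →
    ∀ l, build σ p g s l ≤ σ.pass (app p s) l := by
  induction s with
  | nil =>
    intro p g hg l
    rcases eq_or_lt_of_le (zero_le : 0 ≤ g l) with h | h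
    · rw [build, ← h]; exact zero_le
    · exact le_trans (hg l h).le (cap_le_pass σ p l)
  | cons k i s ih =>
    intro p g hg l
    rw [build, app_cons]
    exact ih _ _ (inv_chAlloc σ p (g k) k i) l

lemma build_lt_cap (s : APlay K ar) : ∀ (p : APlay K ar) (g : K → ℝ≥0∞), Inv σ p g →
    ∀ l, 0 < build σ p g s l → build σ p g s l < cap σ (app p s) l := by
  induction s with
  | nil => intro p g hg l h; exact hg l h
  | cons k i s ih =>
    intro p g hg l
    rw [build, app_cons]
    exact ih _ _ (inv_chAlloc σ p (g k) k i) l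

lemma build_snoc (s : APlay K ar) : ∀ (p : APlay K ar) (g : K → ℝ≥0∞) (k : K) (i : ar k) (l : K),
    build σ p g (s.snoc k i) l = chAlloc σ (app p s) (build σ p g s k) k i l := by
  induction s with
  | nil => intro p g k i l; rfl
  | cons k' i' s' ih =>
    intro p g k i l
    show build σ (p.snoc k' i') (chAlloc σ p (g k') k' i') (s'.snoc k i) l = _
    rw [ih, app_cons]
    rfl

lemma build_consistent (p : APlay K ar) (g : K → ℝ≥0∞) (hg : Inv σ p g)
    (s : APlay K ar) (k : K) (i : ar k) :
    build σ p g s k = ∑' l, build σ p g (s.snoc k i) l := by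
  have h1 : ∀ l, build σ p g (s.snoc k i) l = chAlloc σ (app p s) (build σ p g s k) k i l :=
    build_snoc σ s p g k i
  rw [tsum_congr h1]
  rcases eq_or_lt_of_le ((zero_le : 0 ≤ build σ p g s k)) with h | h
  · rw [← h]
    exact (alloc_tsum_zero _).symm
  · exact (chAlloc_tsum σ (build_lt_cap σ s p g hg k h) i).symm

lemma build_fin (s : APlay K ar) : ∀ (p : APlay K ar) (g : K → ℝ≥0∞),
    {k : K | 0 < g k}.Finite → {l : K | 0 < build σ p g s l}.Finite := by
  induction s with
  | nil => intro p g hgf; exact hgf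
  | cons k i s ih =>
    intro p g hgf
    exact ih _ _ (alloc_finite _ _)

end
end Stmt12

/-- For a victorious play-measure `σ` and every `x < w(σ)` there is a
finitely founded play-measure `τ ≤ σ` of weight at least `x`. -/
theorem stmt_12 {K : Type} {ar : K → Type} (σ : PlayMeasure K ar)
    (hσ : Victorious σ) :
    ∀ x < σ.weight, ∃ τ : PlayMeasure K ar,
      (∀ s k, τ.pass s k ≤ σ.pass s k) ∧ x ≤ τ.weight ∧ τ.FinFounded := by
  intro x hx
  have hcap : x < ∑' k, Stmt12.cap σ .nil k :=
    lt_of_lt_of_le hx (Stmt12.weight_le_capsum σ hσ)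
  have hcapne : (∑' k, Stmt12.cap σ .nil k) ≠ ∞ :=
    ne_top_of_le_ne_top ENNReal.one_ne_top
      (le_trans (ENNReal.tsum_le_tsum fun k => Stmt12.cap_le_pass σ .nil k) (σ.le_one .nil))
  set g₀ : K → ℝ≥0∞ := Stmt12.alloc (fun k => Stmt12.cap σ .nil k) x with hg₀
  have hinv : Stmt12.Inv σ .nil g₀ := fun k h => Stmt12.alloc_lt h
  refine ⟨⟨Stmt12.build σ .nil g₀, ?_, ?_⟩, ?_, ?_, ?_, ?_⟩
  · -- le_one
    intro t
    calc ∑' k, Stmt12.build σ .nil g₀ t k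
        ≤ ∑' k, σ.pass (Stmt12.app .nil t) k :=
          ENNReal.tsum_le_tsum fun k => Stmt12.build_le_pass σ t .nil g₀ hinv k
      _ = ∑' k, σ.pass t k := by rw [Stmt12.app_nil]
      _ ≤ 1 := σ.le_one t
  · -- consistent
    exact fun s k i => Stmt12.build_consistent σ .nil g₀ hinv s k i
  · -- below σ
    intro s k
    have := Stmt12.build_le_pass σ s .nil g₀ hinv k
    rwa [Stmt12.app_nil] at this
  · -- weight
    have hw : (∑' k, Stmt12.build σ .nil g₀ .nil k) = x := by
      have : ∀ k, Stmt12.build σ .nil g₀ .nil k = g₀ k := fun k => rfl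
      rw [tsum_congr this]
      exact Stmt12.alloc_tsum hcap hcapne
    exact le_of_eq hw.symm
  · -- well-founded
    rintro ⟨f, hf⟩
    set r : ℕ → Ordinal := fun n =>
      Stmt12.rk σ (Stmt12.build σ .nil g₀ (prefixPlay f n) (f n).1) (prefixPlay f n) (f n).1
      with hr
    have hdec : ∀ n, r (n+1) < r n := by
      intro n
      have h1 : Stmt12.build σ .nil g₀ (prefixPlay f (n+1)) (f (n+1)).1
          = Stmt12.chAlloc σ (prefixPlay f n)
              (Stmt12.build σ .nil g₀ (prefixPlay f n) (f n).1) (f n).1 (f n).2 ((f (n+1)).1) := by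
        show Stmt12.build σ .nil g₀ ((prefixPlay f n).snoc (f n).1 (f n).2) (f (n+1)).1 = _
        rw [Stmt12.build_snoc σ (prefixPlay f n) .nil g₀, Stmt12.app_nil]
      have hpos : 0 < Stmt12.build σ .nil g₀ (prefixPlay f (n+1)) (f (n+1)).1 := hf (n+1)
      rw [h1] at hpos
      have hlt := Stmt12.chAlloc_rk σ hpos
      show Stmt12.rk σ (Stmt12.build σ .nil g₀ (prefixPlay f (n+1)) (f (n+1)).1)
        (prefixPlay f (n+1)) (f (n+1)).1 < r n
      rw [h1]
      exact hlt
    obtain ⟨o, ⟨n, rfl⟩, hmin⟩ :=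
      Ordinal.lt_wf.has_min (Set.range r) ⟨r 0, ⟨0, rfl⟩⟩
    exact hmin (r (n+1)) ⟨n+1, rfl⟩ (hdec n)
  · -- finitely branching
    intro t
    exact Stmt12.build_fin σ t .nil g₀ (Stmt12.alloc_finite _ _)
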